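/- arXiv:1409.4525 — 3 statements merged into one kernel-verified Lean document; each statement's English description precedes it below -/
import Mathlib

section
/- Let α > 0 and let p : ℝ → ℝ be an odd function which is C¹ on ℝ and C² on ℝ \ {0}. Assume there exist A ≥ 1 and constants 0 < c ≤ C such that for all ξ with |ξ| ≥ A one has c|ξ|^α ≤ |p′(ξ)| ≤ C|ξ|^α and c|ξ|^{α−1} ≤ |p″(ξ)| ≤ C|ξ|^{α−1}. Then there exist A′ ≥ 1, λ₀ ∈ (0,1] and constants 0 < c′ ≤ C′ such that for all (ξ₁, ξ₂) ∈ ℝ² with max(|ξ₁|, |ξ₂|) ≥ A′ and all λ ∈ (0, λ₀], one has c′ |ξ|_min |ξ|_max^α ≤ λ^{α+1} |Ω(ξ₁/λ, ξ₂/λ)| ≤ C′ |ξ|_min |ξ|_max^α. -/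
noncomputable section
open Real

/-- The resonance function associated with a symbol `p`. -/
def Omega (p : ℝ → ℝ) (ξ₁ ξ₂ : ℝ) : ℝ := p (ξ₁ + ξ₂) - p ξ₁ - p ξ₂

/-- `|ξ|_min`: the minimum of `|ξ₁|, |ξ₂|, |ξ₁+ξ₂|`. -/
def ximin (ξ₁ ξ₂ : ℝ) : ℝ := min (min |ξ₁| |ξ₂|) |ξ₁ + ξ₂|

/-- `|ξ|_max`: the maximum of `|ξ₁|, |ξ₂|, |ξ₁+ξ₂|`. -/
def ximax (ξ₁ ξ₂ : ℝ) : ℝ := max (max |ξ₁| |ξ₂|) |ξ₁ + ξ₂|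

open Set intervalIntegral in
lemma omega_symm (p : ℝ → ℝ) (x y : ℝ) : Omega p x y = Omega p y x := by
  unfold Omega; rw [add_comm]; ring

lemma omega_neg {p : ℝ → ℝ} (hodd : ∀ ξ : ℝ, p (-ξ) = -p ξ) (x y : ℝ) :
    Omega p (-x) (-y) = - Omega p x y := by
  unfold Omega; rw [show -x + -y = -(x+y) by ring, hodd, hodd, hodd]; ring

lemma omega_third {p : ℝ → ℝ} (hodd : ∀ ξ : ℝ, p (-ξ) = -p ξ) (x y : ℝ) :
    Omega p x (-(x+y)) = Omega p x y := by
  unfold Omega; rw [show x + -(x+y) = -y by ring, hodd, hodd]; ring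

lemma reduce {p : ℝ → ℝ} (hodd : ∀ ξ : ℝ, p (-ξ) = -p ξ) (ξ₁ ξ₂ : ℝ)
    (h1 : ξ₁ ≠ 0) (h2 : ξ₂ ≠ 0) (h3 : ξ₁ + ξ₂ ≠ 0) :
    ∃ x y : ℝ, 0 < x ∧ 0 < y ∧ x + y = ximax ξ₁ ξ₂ ∧ min x y = ximin ξ₁ ξ₂ ∧
      |Omega p ξ₁ ξ₂| = |Omega p x y| := by
  rcases h1.lt_or_gt with hx | hx
  · rcases h2.lt_or_gt with hy | hy
    · -- both negative
      refine ⟨-ξ₁, -ξ₂, by linarith, by linarith, ?_, ?_, ?_⟩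
      · simp only [ximax, abs_of_neg hx, abs_of_neg hy, abs_of_neg (show ξ₁ + ξ₂ < 0 by linarith)]
        simp only [max_def, min_def]; split_ifs <;> linarith
      · simp only [ximin, abs_of_neg hx, abs_of_neg hy, abs_of_neg (show ξ₁ + ξ₂ < 0 by linarith)]
        simp only [max_def, min_def]; split_ifs <;> linarith
      · rw [omega_neg hodd, abs_neg]
    · -- ξ₁ < 0 < ξ₂
      rcases h3.lt_or_gt with hs | hs
      · -- sum negative : pair ξ₁ and -(ξ₁+ξ₂)? same sign pair: ξ₁<0 and ξ₃=-(s)>0... 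
        -- same-sign pair with sum<0: ξ₁ and ξ₂+? : pair (ξ₂, -(ξ₁+ξ₂)) both > 0
        refine ⟨min ξ₂ (-(ξ₁+ξ₂)), max ξ₂ (-(ξ₁+ξ₂)), lt_min hy (by linarith),
          lt_max_iff.2 (Or.inl hy), ?_, ?_, ?_⟩
        · rw [min_add_max]
          simp only [ximax, abs_of_neg hx, abs_of_pos hy, abs_of_neg hs]
          simp only [max_def, min_def]; split_ifs <;> linarith
        · simp only [ximin, abs_of_neg hx, abs_of_pos hy, abs_of_neg hs]
          simp only [max_def, min_def]; split_ifs <;> linarith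
        · rcases le_total ξ₂ (-(ξ₁+ξ₂)) with h | h
          · rw [min_eq_left h, max_eq_right h, omega_symm p ξ₁ ξ₂,
              ← omega_third hodd ξ₂ ξ₁, show -(ξ₂+ξ₁) = -(ξ₁+ξ₂) by ring]
          · rw [min_eq_right h, max_eq_left h, omega_symm p ξ₁ ξ₂,
              ← omega_third hodd ξ₂ ξ₁, show -(ξ₂+ξ₁) = -(ξ₁+ξ₂) by ring,
              omega_symm]
      · -- sum positive: pair (-ξ₁, ξ₁+ξ₂) both > 0
        refine ⟨min (-ξ₁) (ξ₁+ξ₂), max (-ξ₁) (ξ₁+ξ₂), lt_min (by linarith) hs,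
          lt_max_iff.2 (Or.inr hs), ?_, ?_, ?_⟩
        · rw [min_add_max]
          simp only [ximax, abs_of_neg hx, abs_of_pos hy, abs_of_pos hs]
          simp only [max_def, min_def]; split_ifs <;> linarith
        · simp only [ximin, abs_of_neg hx, abs_of_pos hy, abs_of_pos hs]
          simp only [max_def, min_def]; split_ifs <;> linarith
        · have key : |Omega p ξ₁ ξ₂| = |Omega p (-ξ₁) (ξ₁+ξ₂)| := by
            rw [← omega_third hodd ξ₁ ξ₂, show Omega p ξ₁ (-(ξ₁+ξ₂)) 
              = Omega p (-(-ξ₁)) (-(ξ₁+ξ₂)) by rw [neg_neg], omega_neg hodd, abs_neg]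
          rcases le_total (-ξ₁) (ξ₁+ξ₂) with h | h
          · rw [min_eq_left h, max_eq_right h, key]
          · rw [min_eq_right h, max_eq_left h, key, omega_symm]
  · rcases h2.lt_or_gt with hy | hy
    · -- ξ₂ < 0 < ξ₁
      rcases h3.lt_or_gt with hs | hs
      · -- pair (ξ₁, -(ξ₁+ξ₂)) both > 0
        refine ⟨min ξ₁ (-(ξ₁+ξ₂)), max ξ₁ (-(ξ₁+ξ₂)), lt_min hx (by linarith), lt_max_iff.2 (Or.inl hx), ?_, ?_, ?_⟩
        · rw [min_add_max]
          simp only [ximax, abs_of_pos hx, abs_of_neg hy, abs_of_neg hs]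
          simp only [max_def, min_def]; split_ifs <;> linarith
        · simp only [ximin, abs_of_pos hx, abs_of_neg hy, abs_of_neg hs]
          simp only [max_def, min_def]; split_ifs <;> linarith
        · have key : |Omega p ξ₁ ξ₂| = |Omega p ξ₁ (-(ξ₁+ξ₂))| := by
            rw [omega_third hodd]
          rcases le_total ξ₁ (-(ξ₁+ξ₂)) with h | h
          · rw [min_eq_left h, max_eq_right h, key]
          · rw [min_eq_right h, max_eq_left h, key, omega_symm]
      · -- pair (-ξ₂, ξ₁+ξ₂) both > 0
        refine ⟨min (-ξ₂) (ξ₁+ξ₂), max (-ξ₂) (ξ₁+ξ₂), lt_min (by linarith) hs, lt_max_iff.2 (Or.inr hs), ?_, ?_, ?_⟩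
        · rw [min_add_max]
          simp only [ximax, abs_of_pos hx, abs_of_neg hy, abs_of_pos hs]
          simp only [max_def, min_def]; split_ifs <;> linarith
        · simp only [ximin, abs_of_pos hx, abs_of_neg hy, abs_of_pos hs]
          simp only [max_def, min_def]; split_ifs <;> linarith
        · have key : |Omega p ξ₁ ξ₂| = |Omega p (-ξ₂) (ξ₁+ξ₂)| := by
            rw [omega_symm p ξ₁ ξ₂, ← omega_third hodd ξ₂ ξ₁,
              show Omega p ξ₂ (-(ξ₂+ξ₁)) = Omega p (-(-ξ₂)) (-(ξ₂+ξ₁)) by rw [neg_neg],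
              omega_neg hodd, abs_neg, show ξ₂ + ξ₁ = ξ₁ + ξ₂ by ring]
          rcases le_total (-ξ₂) (ξ₁+ξ₂) with h | h
          · rw [min_eq_left h, max_eq_right h, key]
          · rw [min_eq_right h, max_eq_left h, key, omega_symm]
    · -- both positive
      refine ⟨min ξ₁ ξ₂, max ξ₁ ξ₂, lt_min hx hy, lt_max_iff.2 (Or.inl hx), ?_, ?_, ?_⟩
      · rw [min_add_max]
        simp only [ximax, abs_of_pos hx, abs_of_pos hy, abs_of_pos (show 0 < ξ₁ + ξ₂ by linarith)]
        simp only [max_def, min_def]; split_ifs <;> linarith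
      · simp only [ximin, abs_of_pos hx, abs_of_pos hy, abs_of_pos (show 0 < ξ₁ + ξ₂ by linarith)]
        simp only [max_def, min_def]; split_ifs <;> linarith
      · rcases le_total ξ₁ ξ₂ with h | h
        · rw [min_eq_left h, max_eq_right h]
        · rw [min_eq_right h, max_eq_left h, omega_symm]

open Set intervalIntegral in
set_option maxHeartbeats 2000000 in
lemma key (α : ℝ) (hα : 0 < α) (p : ℝ → ℝ)
    (hodd : ∀ ξ : ℝ, p (-ξ) = -p ξ)
    (hC1 : ContDiff ℝ 1 p)
    (hC2 : ContDiffOn ℝ 2 p {(0:ℝ)}ᶜ)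
    (A c C : ℝ) (hA : 1 ≤ A) (hc : 0 < c) (hcC : c ≤ C)
    (hd1 : ∀ ξ : ℝ, A ≤ |ξ| →
      c * |ξ| ^ α ≤ |deriv p ξ| ∧ |deriv p ξ| ≤ C * |ξ| ^ α)
    (hd2 : ∀ ξ : ℝ, A ≤ |ξ| →
      c * |ξ| ^ (α - 1) ≤ |deriv (deriv p) ξ| ∧ |deriv (deriv p) ξ| ≤ C * |ξ| ^ (α - 1)) :
    ∃ B c₁ C₁ : ℝ, 1 ≤ B ∧ 0 < c₁ ∧ c₁ ≤ C₁ ∧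
      ∀ a b : ℝ, 0 < a → a ≤ b → B ≤ b →
        c₁ * a * b ^ α ≤ |Omega p a b| ∧ |Omega p a b| ≤ C₁ * a * b ^ α := by
  have hA0 : (0:ℝ) < A := lt_of_lt_of_le one_pos hA
  have hC0 : (0:ℝ) < C := lt_of_lt_of_le hc hcC
  have hp0 : p 0 = 0 := by have h := hodd 0; simp at h; linarith
  have hp' : Continuous (deriv p) := hC1.continuous_deriv le_rfl
  -- bound on [-A, A]
  obtain ⟨M0, hM0⟩ := (isCompact_Icc (a := -A) (b := A)).exists_bound_of_continuousOn
    hp'.continuousOn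
  set M : ℝ := max M0 0 with hMdef
  have hM : ∀ x : ℝ, |x| ≤ A → |deriv p x| ≤ M := by
    intro x hx
    have := hM0 x (by constructor <;> [linarith [neg_abs_le x]; linarith [le_abs_self x]])
    simp only [Real.norm_eq_abs] at this
    exact le_trans this (le_max_left _ _)
  have hMnn : 0 ≤ M := le_max_right _ _
  -- abs facts
  have habs : ∀ x : ℝ, A ≤ x → A ≤ |x| := fun x hx => by
    rw [abs_of_nonneg (by linarith)]; exact hx
  have hne : ∀ x : ℝ, A ≤ x → deriv p x ≠ 0 := by
    intro x hx h0
    have h := (hd1 x (habs x hx)).1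
    rw [h0, abs_zero] at h
    have : 0 < |x| ^ α := rpow_pos_of_pos (by rw [abs_of_nonneg (by linarith)]; linarith) α
    nlinarith
  -- same-sign of deriv p on [A, ∞)
  have hsign : ∀ x y : ℝ, A ≤ x → A ≤ y → 0 < deriv p x * deriv p y := by
    intro x y hx hy
    rcases (mul_ne_zero (hne x hx) (hne y hy)).lt_or_gt with h | h
    · exfalso
      have h0 : (0:ℝ) ∈ uIcc (deriv p x) (deriv p y) := by
        rcases mul_neg_iff.1 h with ⟨h1, h2⟩ | ⟨h1, h2⟩
        · exact mem_uIcc.2 (Or.inr ⟨h2.le, h1.le⟩)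
        · exact mem_uIcc.2 (Or.inl ⟨h1.le, h2.le⟩)
      obtain ⟨z, hz, hz0⟩ := intermediate_value_uIcc hp'.continuousOn h0
      have hzA : A ≤ z := le_trans (le_min hx hy) (mem_uIcc.1 hz |>.elim
        (fun h => (min_le_left x y).trans h.1) (fun h => (min_le_right x y).trans h.1))
      exact hne z hzA hz0
    · exact h
  -- second derivative facts
  set q : ℝ → ℝ := deriv (deriv p) with hqdef
  have hopen : IsOpen ({(0:ℝ)}ᶜ) := isOpen_compl_singleton
  have hsub : Ici A ⊆ ({(0:ℝ)}ᶜ) := fun x hx => by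
    simp only [mem_compl_iff, mem_singleton_iff]
    intro h0; rw [h0] at hx; exact absurd (mem_Ici.1 hx) (by linarith)
  have hC2' : ContDiffOn ℝ 1 (deriv p) ({(0:ℝ)}ᶜ) :=
    hC2.deriv_of_isOpen hopen (by norm_num)
  have hdq : ∀ x : ℝ, x ≠ 0 → HasDerivAt (deriv p) (q x) x := by
    intro x hx
    exact ((hC2'.differentiableOn one_ne_zero).differentiableAt
      (hopen.mem_nhds (by simpa using hx))).hasDerivAt
  have hqc : ContinuousOn q (Ici A) :=
    (hC2'.continuousOn_deriv_of_isOpen hopen le_rfl).mono hsub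
  have hqne : ∀ x : ℝ, A ≤ x → q x ≠ 0 := by
    intro x hx h0
    have h := (hd2 x (habs x hx)).1
    rw [h0, abs_zero] at h
    have : 0 < |x| ^ (α - 1) := rpow_pos_of_pos (by rw [abs_of_nonneg (by linarith)]; linarith) _
    nlinarith
  have hqsign : ∀ x y : ℝ, A ≤ x → A ≤ y → 0 < q x * q y := by
    intro x y hx hy
    rcases (mul_ne_zero (hqne x hx) (hqne y hy)).lt_or_gt with h | h
    · exfalso
      have h0 : (0:ℝ) ∈ uIcc (q x) (q y) := by
        rcases mul_neg_iff.1 h with ⟨h1, h2⟩ | ⟨h1, h2⟩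
        · exact mem_uIcc.2 (Or.inr ⟨h2.le, h1.le⟩)
        · exact mem_uIcc.2 (Or.inl ⟨h1.le, h2.le⟩)
      have huIcc : uIcc x y ⊆ Ici A := by
        intro z hz
        exact mem_Ici.2 (le_trans (le_min hx hy) (mem_uIcc.1 hz |>.elim
          (fun h => (min_le_left x y).trans h.1) (fun h => (min_le_right x y).trans h.1)))
      obtain ⟨z, hz, hz0⟩ := intermediate_value_uIcc (hqc.mono huIcc) h0
      exact hqne z (huIcc hz) hz0
    · exact h
  -- sign e
  set e : ℝ := if 0 < deriv p A then 1 else -1 with hedef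
  have he2 : e * e = 1 := by rw [hedef]; split_ifs <;> norm_num
  have heabs : |e| = 1 := by rw [hedef]; split_ifs <;> simp
  set F : ℝ → ℝ := fun x => e * deriv p x with hFdef
  have hFpos : ∀ x : ℝ, A ≤ x → 0 < F x := by
    intro x hx
    have hs := hsign A x le_rfl hx
    rw [hFdef]; simp only
    rw [hedef]; split_ifs with h
    · nlinarith
    · rcases (hne A le_rfl).lt_or_gt with h' | h'
      · nlinarith
      · exact absurd h' h
  have hFabs : ∀ x : ℝ, A ≤ x → F x = |deriv p x| := by
    intro x hx
    have h1 : F x = |F x| := (abs_of_pos (hFpos x hx)).symm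
    rw [h1, hFdef]; simp only [abs_mul, heabs, one_mul]
  have hFderiv : ∀ x : ℝ, x ≠ 0 → HasDerivAt F (e * q x) x := by
    intro x hx
    exact (hdq x hx).const_mul e
  have hFcont : Continuous F := continuous_const.mul hp'
  have hFdiff : ∀ x : ℝ, x ≠ 0 → DifferentiableAt ℝ F x :=
    fun x hx => (hFderiv x hx).differentiableAt
  -- rpow helper: pick point witnessing growth
  have hgrow : ∀ K : ℝ, 0 < K → ∃ x : ℝ, A ≤ x ∧ K ≤ c * x ^ α := by
    intro K hK
    refine ⟨max A ((K/c) ^ α⁻¹), le_max_left _ _, ?_⟩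
    have h1 : (0:ℝ) ≤ (K/c) ^ α⁻¹ := (rpow_pos_of_pos (div_pos hK hc) _).le
    have h2 : ((K/c) ^ α⁻¹) ^ α ≤ (max A ((K/c) ^ α⁻¹)) ^ α :=
      rpow_le_rpow h1 (le_max_right _ _) hα.le
    rw [← rpow_mul (div_pos hK hc).le, inv_mul_cancel₀ hα.ne', rpow_one] at h2
    calc K = c * (K / c) := by field_simp
    _ ≤ c * (max A ((K/c) ^ α⁻¹)) ^ α := by nlinarith
  -- e * q ≥ 0 on [A, ∞)
  have hq_nonneg : ∀ x : ℝ, A ≤ x → 0 ≤ e * q x := by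
    intro x hx
    by_contra hcon
    push_neg at hcon
    have hqneg : ∀ y : ℝ, A ≤ y → e * q y < 0 := by
      intro y hy
      have hs := hqsign x y hx hy
      rcases (mul_ne_zero (show e ≠ 0 by intro h; rw [h] at he2; norm_num at he2)
        (hqne y hy)).lt_or_gt with h | h
      · exact h
      · exfalso; nlinarith
    have hanti : AntitoneOn F (Ici A) := by
      apply antitoneOn_of_deriv_nonpos (convex_Ici A) hFcont.continuousOn
      · intro z hz
        rw [interior_Ici] at hz
        exact (hFdiff z (by intro h; rw [h] at hz; exact absurd (mem_Ioi.1 hz) (by linarith))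
          ).differentiableWithinAt
      · intro z hz
        rw [interior_Ici] at hz
        rw [(hFderiv z (by intro h; rw [h] at hz; exact absurd (mem_Ioi.1 hz) (by linarith))).deriv]
        exact (hqneg z (le_of_lt (mem_Ioi.1 hz))).le
    obtain ⟨x₀, hx₀A, hx₀⟩ := hgrow (C * A ^ α + 1) (by positivity)
    have h1 : F x₀ ≤ F A := hanti (mem_Ici.2 le_rfl) (mem_Ici.2 hx₀A) hx₀A
    have h2 : c * x₀ ^ α ≤ F x₀ := by
      rw [hFabs x₀ hx₀A]
      exact le_trans (by rw [abs_of_nonneg (by linarith : (0:ℝ) ≤ x₀)]) (hd1 x₀ (habs x₀ hx₀A)).1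
    have h3 : F A ≤ C * A ^ α := by
      rw [hFabs A le_rfl]
      exact le_trans (hd1 A (habs A le_rfl)).2 (by rw [abs_of_nonneg (by linarith)])
    linarith
  have hmono : MonotoneOn F (Ici A) := by
    apply monotoneOn_of_deriv_nonneg (convex_Ici A) hFcont.continuousOn
    · intro z hz
      rw [interior_Ici] at hz
      exact (hFdiff z (by intro h; rw [h] at hz; exact absurd (mem_Ioi.1 hz) (by linarith))
        ).differentiableWithinAt
    · intro z hz
      rw [interior_Ici] at hz
      rw [(hFderiv z (by intro h; rw [h] at hz; exact absurd (mem_Ioi.1 hz) (by linarith))).deriv]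
      exact hq_nonneg z (le_of_lt (mem_Ioi.1 hz))
  -- FTC representation of Omega
  have hOmega : ∀ a b : ℝ, 0 < a → 0 < b →
      Omega p a b = ∫ t in (0:ℝ)..a, (deriv p (b + t) - deriv p t) := by
    intro a b ha hb
    have hdiffat : ∀ x : ℝ, DifferentiableAt ℝ p x := fun x => (hC1.differentiable one_ne_zero) x
    have h1 : (∫ t in (0:ℝ)..a, deriv p (b + t)) = p (b + a) - p (b + 0) := by
      rw [intervalIntegral.integral_comp_add_left (fun t => deriv p t) b]
      exact intervalIntegral.integral_deriv_eq_sub (fun x _ => hdiffat x)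
        (hp'.intervalIntegrable _ _)
    have h2 : (∫ t in (0:ℝ)..a, deriv p t) = p a - p 0 :=
      intervalIntegral.integral_deriv_eq_sub (fun x _ => hdiffat x) (hp'.intervalIntegrable _ _)
    have hi1 : IntervalIntegrable (fun t : ℝ => deriv p (b + t)) MeasureTheory.volume 0 a :=
      (hp'.comp (continuous_const.add continuous_id)).intervalIntegrable 0 a
    have hi2 : IntervalIntegrable (fun t : ℝ => deriv p t) MeasureTheory.volume 0 a :=
      hp'.intervalIntegrable 0 a
    rw [intervalIntegral.integral_sub hi1 hi2, h1, h2, hp0, add_zero]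
    unfold Omega; rw [add_comm b a]; ring
  -- constants
  set δ : ℝ := min 1 ((c / (2*C)) ^ α⁻¹) with hδdef
  have hδ0 : 0 < δ := lt_min one_pos (rpow_pos_of_pos (by positivity) _)
  have hδ1 : δ ≤ 1 := min_le_left _ _
  have hδα : C * δ ^ α ≤ c / 2 := by
    have h1 : δ ^ α ≤ ((c / (2*C)) ^ α⁻¹) ^ α :=
      rpow_le_rpow hδ0.le (min_le_right _ _) hα.le
    rw [← rpow_mul (by positivity : (0:ℝ) ≤ c / (2*C)), inv_mul_cancel₀ hα.ne', rpow_one] at h1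
    calc C * δ ^ α ≤ C * (c / (2*C)) := by nlinarith
    _ = c / 2 := by field_simp
  set B : ℝ := max (max (A / δ) ((4*M/c + 1) ^ α⁻¹)) 1 with hBdef
  have hB1 : 1 ≤ B := le_max_right _ _
  set c₁ : ℝ := c * δ / 4 with hc₁def
  set C₁ : ℝ := 2*M + 2*C*(2:ℝ) ^ α with hC₁def
  have h2α : (1:ℝ) ≤ (2:ℝ) ^ α := one_le_rpow one_le_two hα.le
  have hc₁0 : 0 < c₁ := by positivity
  have hc₁C₁ : c₁ ≤ C₁ := by nlinarith
  refine ⟨B, c₁, C₁, hB1, hc₁0, hc₁C₁, ?_⟩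
  intro a b ha hab hB
  have hb0 : 0 < b := lt_of_lt_of_le (by linarith) hB
  have hbA : A ≤ b := by
    have : A / δ ≤ B := le_trans (le_max_left _ _) (le_max_left _ _)
    have h2 : A / δ ≤ b := le_trans this hB
    calc A = (A / δ) * δ := by field_simp
    _ ≤ b * 1 := mul_le_mul (by linarith) hδ1 hδ0.le (by positivity)
    _ = b := mul_one b
  have hδbA : A ≤ δ * b := by
    have : A / δ ≤ b := le_trans (le_trans (le_max_left _ _) (le_max_left _ _)) hB
    rw [div_le_iff₀ hδ0] at this; linarith [this]
  have hbα1 : (1:ℝ) ≤ b ^ α := one_le_rpow (by linarith) hα.le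
  have hMb : M ≤ c / 4 * b ^ α := by
    have h1 : (4*M/c + 1) ^ α⁻¹ ≤ B := le_trans (le_max_right _ _) (le_max_left _ _)
    have h2 : ((4*M/c + 1) ^ α⁻¹) ^ α ≤ b ^ α :=
      rpow_le_rpow (rpow_pos_of_pos (by positivity) _).le (le_trans h1 hB) hα.le
    rw [← rpow_mul (by positivity : (0:ℝ) ≤ 4*M/c + 1), inv_mul_cancel₀ hα.ne', rpow_one] at h2
    have h3 : 4*M/c + 1 ≤ b ^ α := h2
    have : 4*M/c ≤ b ^ α := by linarith
    calc M = c / 4 * (4*M/c) := by field_simp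
    _ ≤ c / 4 * b ^ α := by nlinarith
  set m : ℝ := min a (δ * b) with hmdef
  have hm0 : 0 < m := lt_min ha (by positivity)
  have hma : m ≤ a := min_le_left _ _
  have hδam : δ * a ≤ m := le_min (by nlinarith) (by nlinarith)
  set g : ℝ → ℝ := fun t => deriv p (b + t) - deriv p t with hgdef
  have hgcont : Continuous g := (hp'.comp (continuous_const.add continuous_id)).sub hp'
  have hegcont : Continuous (fun t => e * g t) := continuous_const.mul hgcont
  -- pointwise bounds
  have hbound1 : ∀ t : ℝ, t ∈ Icc (0:ℝ) m → c / 4 * b ^ α ≤ e * g t := by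
    intro t ht
    obtain ⟨ht0, htm⟩ := ht
    have htδb : t ≤ δ * b := le_trans htm (min_le_right _ _)
    have hbt : A ≤ b + t := by linarith
    have h1 : c * b ^ α ≤ e * deriv p (b + t) := by
      have := (hd1 (b + t) (habs _ hbt)).1
      have habs' : |b + t| = b + t := abs_of_nonneg (by linarith)
      rw [habs'] at this
      have hF := hFabs (b + t) hbt
      have hrp : b ^ α ≤ (b + t) ^ α := rpow_le_rpow hb0.le (by linarith) hα.le
      rw [show e * deriv p (b+t) = F (b+t) from rfl, hF]
      nlinarith
    have h2 : e * deriv p t ≤ c / 4 * b ^ α + c / 2 * b ^ α := by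
      have habs2 : e * deriv p t ≤ |deriv p t| := by
        calc e * deriv p t ≤ |e * deriv p t| := le_abs_self _
        _ = |deriv p t| := by rw [abs_mul, heabs, one_mul]
      rcases le_total t A with hcase | hcase
      · have := hM t (by rw [abs_of_nonneg ht0]; exact hcase)
        have hpos : 0 ≤ c / 2 * b ^ α := by positivity
        linarith
      · have := (hd1 t (habs t hcase)).2
        have habs' : |t| = t := abs_of_nonneg ht0
        rw [habs'] at this
        have hrp : t ^ α ≤ (δ*b) ^ α := rpow_le_rpow ht0 htδb hα.le
        have hδb : (δ*b) ^ α = δ ^ α * b ^ α := mul_rpow hδ0.le hb0.le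
        have hfin : C * t ^ α ≤ c / 2 * b ^ α := by
          calc C * t ^ α ≤ C * (δ ^ α * b ^ α) := by rw [← hδb]; nlinarith
          _ = (C * δ ^ α) * b ^ α := by ring
          _ ≤ c / 2 * b ^ α := by nlinarith [rpow_pos_of_pos hb0 α]
        have hpos : 0 ≤ c / 4 * b ^ α := by positivity
        linarith
    have : e * g t = e * deriv p (b + t) - e * deriv p t := by rw [hgdef]; ring
    rw [this]; linarith
  have hbound2 : ∀ t : ℝ, t ∈ Icc m a → 0 ≤ e * g t := by
    intro t ht
    obtain ⟨htm, hta⟩ := ht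
    rcases le_total t (δ * b) with hcase | hcase
    · have htm' : t ≤ m := le_min hta hcase
      have h1 := hbound1 t ⟨le_trans hm0.le htm, htm'⟩
      have hpos : 0 < c / 4 * b ^ α := by positivity
      exact le_trans hpos.le h1
    · have htA : A ≤ t := le_trans hδbA hcase
      have h1 : F t ≤ F (b + t) := hmono (mem_Ici.2 htA) (mem_Ici.2 (by linarith)) (by linarith)
      have : e * g t = F (b + t) - F t := by rw [hgdef]; ring
      rw [this]; linarith
  -- integrals
  have hint1 : IntervalIntegrable (fun t => e * g t) MeasureTheory.volume 0 m :=
    hegcont.intervalIntegrable _ _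
  have hint2 : IntervalIntegrable (fun t => e * g t) MeasureTheory.volume m a :=
    hegcont.intervalIntegrable _ _
  have hsplit : (∫ t in (0:ℝ)..a, e * g t)
      = (∫ t in (0:ℝ)..m, e * g t) + ∫ t in m..a, e * g t :=
    (intervalIntegral.integral_add_adjacent_intervals hint1 hint2).symm
  have hlow1 : c / 4 * b ^ α * m ≤ ∫ t in (0:ℝ)..m, e * g t := by
    have hconst : (∫ _t in (0:ℝ)..m, c / 4 * b ^ α) = c / 4 * b ^ α * m := by
      rw [intervalIntegral.integral_const]; rw [smul_eq_mul]; ring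
    rw [← hconst]
    exact intervalIntegral.integral_mono_on hm0.le
      (intervalIntegrable_const) hint1 hbound1
  have hlow2 : 0 ≤ ∫ t in m..a, e * g t :=
    intervalIntegral.integral_nonneg hma hbound2
  have heOmega : e * Omega p a b = ∫ t in (0:ℝ)..a, e * g t := by
    rw [intervalIntegral.integral_const_mul, ← hOmega a b ha hb0]
  have hlower : c₁ * a * b ^ α ≤ |Omega p a b| := by
    have h1 : c / 4 * b ^ α * m ≤ e * Omega p a b := by
      rw [heOmega, hsplit]; linarith
    have h2 : e * Omega p a b ≤ |Omega p a b| := by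
      calc e * Omega p a b ≤ |e * Omega p a b| := le_abs_self _
      _ = |Omega p a b| := by rw [abs_mul, heabs, one_mul]
    have h3 : c / 4 * b ^ α * (δ * a) ≤ c / 4 * b ^ α * m := by
      have : (0:ℝ) ≤ c / 4 * b ^ α := by positivity
      nlinarith
    calc c₁ * a * b ^ α = c / 4 * b ^ α * (δ * a) := by rw [hc₁def]; ring
    _ ≤ |Omega p a b| := le_trans h3 (le_trans h1 h2)
  -- upper bound
  have habs2b : ∀ x : ℝ, |x| ≤ 2*b → |deriv p x| ≤ M + C * (2*b) ^ α := by
    intro x hx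
    rcases le_total |x| A with hcase | hcase
    · have := hM x hcase
      have : (0:ℝ) ≤ C * (2*b) ^ α := by positivity
      linarith [hM x hcase]
    · have h1 := (hd1 x hcase).2
      have h2 : |x| ^ α ≤ (2*b) ^ α := rpow_le_rpow (abs_nonneg x) hx hα.le
      have hMn : (0:ℝ) ≤ M := hMnn
      nlinarith
  have hupper : |Omega p a b| ≤ C₁ * a * b ^ α := by
    have hnorm : ∀ t ∈ Set.uIoc (0:ℝ) a, ‖g t‖ ≤ 2*M + 2*C*(2*b) ^ α := by
      intro t ht
      rw [Set.uIoc_of_le ha.le] at ht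
      obtain ⟨ht0, hta⟩ := ht
      have h1 : |deriv p (b + t)| ≤ M + C * (2*b) ^ α := by
        apply habs2b
        rw [abs_of_nonneg (by linarith)]
        linarith
      have h2 : |deriv p t| ≤ M + C * (2*b) ^ α := by
        apply habs2b
        rw [abs_of_nonneg ht0.le]
        linarith
      rw [hgdef]; simp only [Real.norm_eq_abs]
      calc |deriv p (b + t) - deriv p t| ≤ |deriv p (b + t)| + |deriv p t| := abs_sub _ _
      _ ≤ 2*M + 2*C*(2*b) ^ α := by linarith
    have h3 := intervalIntegral.norm_integral_le_of_norm_le_const hnorm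
    rw [← hOmega a b ha hb0] at h3
    simp only [Real.norm_eq_abs, sub_zero] at h3
    have h4 : |Omega p a b| ≤ (2*M + 2*C*(2*b) ^ α) * a := by
      rw [abs_of_pos ha] at h3; exact h3
    have h5 : (2*b) ^ α = (2:ℝ) ^ α * b ^ α := mul_rpow (by norm_num) hb0.le
    calc |Omega p a b| ≤ (2*M + 2*C*(2*b) ^ α) * a := h4
    _ = (2*M + 2*C*((2:ℝ) ^ α * b ^ α)) * a := by rw [h5]
    _ ≤ (2*M*b ^ α + 2*C*(2:ℝ) ^ α * b ^ α) * a := by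
        nlinarith [mul_nonneg (mul_nonneg (by linarith : (0:ℝ) ≤ 2*M)
          (by linarith : (0:ℝ) ≤ b ^ α - 1)) ha.le]
    _ = C₁ * a * b ^ α := by rw [hC₁def]; ring
  exact ⟨hlower, hupper⟩

open Set in
set_option maxHeartbeats 1000000 in
theorem stmt0 (α : ℝ) (hα : 0 < α) (p : ℝ → ℝ)
    (hodd : ∀ ξ : ℝ, p (-ξ) = -p ξ)
    (hC1 : ContDiff ℝ 1 p)
    (hC2 : ContDiffOn ℝ 2 p {(0:ℝ)}ᶜ)
    (A c C : ℝ) (hA : 1 ≤ A) (hc : 0 < c) (hcC : c ≤ C)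
    (hd1 : ∀ ξ : ℝ, A ≤ |ξ| →
      c * |ξ| ^ α ≤ |deriv p ξ| ∧ |deriv p ξ| ≤ C * |ξ| ^ α)
    (hd2 : ∀ ξ : ℝ, A ≤ |ξ| →
      c * |ξ| ^ (α - 1) ≤ |deriv (deriv p) ξ| ∧ |deriv (deriv p) ξ| ≤ C * |ξ| ^ (α - 1)) :
    ∃ A' : ℝ, 1 ≤ A' ∧ ∃ lam₀ : ℝ, 0 < lam₀ ∧ lam₀ ≤ 1 ∧
      ∃ c' C' : ℝ, 0 < c' ∧ c' ≤ C' ∧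
        ∀ ξ₁ ξ₂ lam : ℝ, A' ≤ max |ξ₁| |ξ₂| → 0 < lam → lam ≤ lam₀ →
          c' * ximin ξ₁ ξ₂ * ximax ξ₁ ξ₂ ^ α
              ≤ lam ^ (α + 1) * |Omega p (ξ₁ / lam) (ξ₂ / lam)| ∧
          lam ^ (α + 1) * |Omega p (ξ₁ / lam) (ξ₂ / lam)|
              ≤ C' * ximin ξ₁ ξ₂ * ximax ξ₁ ξ₂ ^ α := by
  obtain ⟨B, c₁, C₁, hB1, hc₁0, hc₁C₁, hkey⟩ :=
    key α hα p hodd hC1 hC2 A c C hA hc hcC hd1 hd2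
  have hp0 : p 0 = 0 := by have h := hodd 0; simp at h; linarith
  have h2α : (0:ℝ) < (2:ℝ) ^ α := rpow_pos_of_pos two_pos α
  set c' : ℝ := c₁ / (2:ℝ) ^ α with hc'def
  set C' : ℝ := max c' C₁ with hC'def
  have hc'0 : 0 < c' := by positivity
  have hcore : ∀ η₁ η₂ : ℝ, 2*B ≤ max |η₁| |η₂| →
      c' * ximin η₁ η₂ * ximax η₁ η₂ ^ α ≤ |Omega p η₁ η₂| ∧
      |Omega p η₁ η₂| ≤ C' * ximin η₁ η₂ * ximax η₁ η₂ ^ α := by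
    intro η₁ η₂ hmax
    have hmaxnn : 0 ≤ ximax η₁ η₂ := le_trans (abs_nonneg _) (le_max_right _ _)
    by_cases h1 : η₁ = 0
    · have hxm : ximin η₁ η₂ = 0 := by
        rw [ximin, h1, abs_zero, min_eq_left (abs_nonneg η₂), zero_add,
          min_eq_left (abs_nonneg η₂)]
      have hO : Omega p η₁ η₂ = 0 := by rw [Omega, h1, zero_add, hp0]; ring
      rw [hxm, hO]; norm_num
    by_cases h2 : η₂ = 0
    · have hxm : ximin η₁ η₂ = 0 := by
        rw [ximin, h2, abs_zero, min_eq_right (abs_nonneg η₁), add_zero]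
        exact min_eq_left (abs_nonneg η₁)
      have hO : Omega p η₁ η₂ = 0 := by rw [Omega, h2, add_zero, hp0]; ring
      rw [hxm, hO]; norm_num
    by_cases h3 : η₁ + η₂ = 0
    · have hxm : ximin η₁ η₂ = 0 := by
        rw [ximin, h3, abs_zero]
        exact min_eq_right (le_min (abs_nonneg η₁) (abs_nonneg η₂))
      have hO : Omega p η₁ η₂ = 0 := by
        rw [Omega, h3, hp0, show η₂ = -η₁ by linarith, hodd]; ring
      rw [hxm, hO]; norm_num
    · obtain ⟨x, y, hx, hy, hsum, hmin, hOeq⟩ := reduce hodd η₁ η₂ h1 h2 h3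
      set a : ℝ := min x y with hadef
      set b : ℝ := max x y with hbdef
      have ha : 0 < a := lt_min hx hy
      have hab : a ≤ b := min_le_max
      have hb2 : x + y ≤ 2*b := by
        rcases le_total x y with h | h
        · rw [hbdef, max_eq_right h]; linarith
        · rw [hbdef, max_eq_left h]; linarith
      have hbxy : b ≤ x + y := by
        rcases le_total x y with h | h
        · rw [hbdef, max_eq_right h]; linarith
        · rw [hbdef, max_eq_left h]; linarith
      have hBb : B ≤ b := by
        have h4 : max |η₁| |η₂| ≤ ximax η₁ η₂ := le_max_left _ _
        rw [← hsum] at h4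
        linarith
      have hOab : |Omega p x y| = |Omega p a b| := by
        rcases le_total x y with h | h
        · rw [hadef, hbdef, min_eq_left h, max_eq_right h]
        · rw [hadef, hbdef, min_eq_right h, max_eq_left h, omega_symm]
      obtain ⟨hL, hU⟩ := hkey a b ha hab hBb
      have hxy0 : 0 < x + y := by linarith
      have hrp1 : (x + y) ^ α ≤ (2:ℝ) ^ α * b ^ α := by
        rw [← mul_rpow (by norm_num) (by linarith : (0:ℝ) ≤ b)]
        exact rpow_le_rpow hxy0.le hb2 hα.le
      have hrp2 : b ^ α ≤ (x + y) ^ α := rpow_le_rpow (by linarith) hbxy hα.le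
      constructor
      · rw [← hmin, ← hsum, hOeq, hOab]
        calc c' * a * (x+y) ^ α ≤ c' * a * ((2:ℝ) ^ α * b ^ α) := by
              apply mul_le_mul_of_nonneg_left hrp1 (mul_nonneg hc'0.le ha.le)
        _ = c₁ * a * b ^ α := by rw [hc'def]; field_simp
        _ ≤ |Omega p a b| := hL
      · rw [← hmin, ← hsum, hOeq, hOab]
        calc |Omega p a b| ≤ C₁ * a * b ^ α := hU
        _ ≤ C₁ * a * (x+y) ^ α := by
              apply mul_le_mul_of_nonneg_left hrp2 (mul_nonneg (by linarith) ha.le)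
        _ ≤ C' * a * (x+y) ^ α := by
              have h5 : C₁ ≤ C' := le_max_right _ _
              have h6 : (0:ℝ) ≤ a * (x+y) ^ α :=
                mul_nonneg ha.le (rpow_nonneg hxy0.le α)
              nlinarith
  refine ⟨2*B, by linarith, 1, one_pos, le_rfl, c', C',
    hc'0, le_max_left _ _, ?_⟩
  intro ξ₁ ξ₂ lam hmax hlam hlam1
  set η₁ : ℝ := ξ₁ / lam with hη₁def
  set η₂ : ℝ := ξ₂ / lam with hη₂def
  have hxi1 : ξ₁ = lam * η₁ := by rw [hη₁def]; field_simp
  have hxi2 : ξ₂ = lam * η₂ := by rw [hη₂def]; field_simp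
  have habs1 : |ξ₁| = lam * |η₁| := by rw [hxi1, abs_mul, abs_of_pos hlam]
  have habs2 : |ξ₂| = lam * |η₂| := by rw [hxi2, abs_mul, abs_of_pos hlam]
  have habs3 : |ξ₁ + ξ₂| = lam * |η₁ + η₂| := by
    rw [hxi1, hxi2, ← mul_add, abs_mul, abs_of_pos hlam]
  have hmono := monotone_mul_left_of_nonneg hlam.le
  have hXm : ximin ξ₁ ξ₂ = lam * ximin η₁ η₂ := by
    rw [ximin, ximin, habs1, habs2, habs3, ← hmono.map_min, ← hmono.map_min]
  have hXM : ximax ξ₁ ξ₂ = lam * ximax η₁ η₂ := by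
    rw [ximax, ximax, habs1, habs2, habs3, ← hmono.map_max, ← hmono.map_max]
  have hmaxnn : 0 ≤ ximax η₁ η₂ := le_trans (abs_nonneg _) (le_max_right _ _)
  have hge1 : |ξ₁| ≤ |η₁| := by
    rw [habs1] at *
    nlinarith [abs_nonneg η₁]
  have hge2 : |ξ₂| ≤ |η₂| := by
    rw [habs2] at *
    nlinarith [abs_nonneg η₂]
  have hmax' : 2*B ≤ max |η₁| |η₂| := le_trans hmax (max_le_max hge1 hge2)
  obtain ⟨hL, hU⟩ := hcore η₁ η₂ hmax'
  have hsc : ∀ K : ℝ, K * ximin ξ₁ ξ₂ * ximax ξ₁ ξ₂ ^ α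
      = lam ^ (α+1) * (K * ximin η₁ η₂ * ximax η₁ η₂ ^ α) := by
    intro K
    rw [hXm, hXM, mul_rpow hlam.le hmaxnn, rpow_add hlam, rpow_one]; ring
  have hlamp : (0:ℝ) ≤ lam ^ (α+1) := (rpow_pos_of_pos hlam _).le
  constructor
  · rw [hsc c']
    exact mul_le_mul_of_nonneg_left hL hlamp
  · rw [hsc C']
    exact mul_le_mul_of_nonneg_left hU hlamp
end
end

section
/- Let α > 0 and p(ξ) = ξ|ξ|^α (the symbol of the purely dispersive operator ∂_x D_x^α). Then there exist constants 0 < c ≤ C, depending only on α, such that for all (ξ₁, ξ₂) ∈ ℝ², c |ξ|_min |ξ|_max^α ≤ |Ω(ξ₁,ξ₂)| ≤ C |ξ|_min |ξ|_max^α. -/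
noncomputable section
open Real

namespace Stmt1Aux

lemma hasDerivAt_p {α : ℝ} (hα : 0 < α) {x : ℝ} (hx : x ≠ 0) :
    HasDerivAt (fun ξ : ℝ => ξ * |ξ| ^ α) ((1 + α) * |x| ^ α) x := by
  have habs : HasDerivAt (fun ξ : ℝ => |ξ|) ((SignType.sign x : ℝ)) x := hasDerivAt_abs hx
  have habs' : |x| ≠ 0 := abs_ne_zero.mpr hx
  have hpos : (0:ℝ) < |x| := abs_pos.mpr hx
  have h1 : HasDerivAt (fun ξ : ℝ => |ξ| ^ α)
      ((SignType.sign x : ℝ) * α * |x| ^ (α - 1)) x := habs.rpow_const (Or.inl habs')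
  have h2 : HasDerivAt (fun ξ : ℝ => ξ * |ξ| ^ α)
      (1 * |x| ^ α + x * ((SignType.sign x : ℝ) * α * |x| ^ (α - 1))) x :=
    (hasDerivAt_id' x).mul h1
  convert h2 using 1
  have hs : x * (SignType.sign x : ℝ) = |x| := by
    rcases lt_trichotomy x 0 with h | h | h
    · simp [sign_neg h, abs_of_neg h]
    · exact absurd h hx
    · simp [sign_pos h, abs_of_pos h]
  have hpow : |x| ^ (α - 1) * |x| = |x| ^ α := by
    nth_rewrite 2 [← Real.rpow_one |x|]
    rw [← Real.rpow_add hpos]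
    norm_num
  have : x * ((SignType.sign x : ℝ) * α * |x| ^ (α - 1))
      = (x * (SignType.sign x : ℝ)) * α * |x| ^ (α - 1) := by ring
  rw [this, hs]
  nlinarith [hpow]

/-- Core estimate in the normalized case `0 < a`, `a ≤ |b|`, `a ≤ |a+b|`. -/
lemma core {α : ℝ} (hα : 0 < α) {a b : ℝ} (ha : 0 < a) (h1 : a ≤ |b|) (h2 : a ≤ |a + b|) :
    α / 2 ^ α * a * (max |b| |a + b|) ^ α
      ≤ (a + b) * |a + b| ^ α - a * |a| ^ α - b * |b| ^ α ∧
    (a + b) * |a + b| ^ α - a * |a| ^ α - b * |b| ^ α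
      ≤ (1 + α) * a * (max |b| |a + b|) ^ α := by
  set m := min |b| |a + b| with hm
  set M := max |b| |a + b| with hM
  have ham : a ≤ m := le_min h1 h2
  have hmpos : 0 < m := lt_of_lt_of_le ha ham
  have hmM : m ≤ M := min_le_max
  have hMpos : 0 < M := lt_of_lt_of_le hmpos hmM
  have t1 : |b| ≤ |a + b| + a := by
    calc |b| = |(a + b) + (-a)| := by ring_nf
      _ ≤ |a + b| + |(-a)| := abs_add_le _ _
      _ = |a + b| + a := by rw [abs_neg, abs_of_pos ha]
  have t2 : |a + b| ≤ |b| + a := by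
    calc |a + b| ≤ |a| + |b| := abs_add_le a b
      _ = |b| + a := by rw [abs_of_pos ha]; ring
  have hM2m : M ≤ 2 * m := by
    rcases le_total |b| |a + b| with h | h
    · have e1 : M = |a + b| := by rw [hM, max_eq_right h]
      have e2 : m = |b| := by rw [hm, min_eq_left h]
      rw [e1, e2]; rw [e2] at ham; linarith
    · have e1 : M = |b| := by rw [hM, max_eq_left h]
      have e2 : m = |a + b| := by rw [hm, min_eq_right h]
      rw [e1, e2]; rw [e2] at ham; linarith
  -- for t in [0,a], m ≤ |b + t| ≤ M
  have hbt : ∀ t ∈ Set.Icc (0:ℝ) a, m ≤ |b + t| ∧ |b + t| ≤ M := by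
    intro t ht
    obtain ⟨ht0, hta⟩ := ht
    rcases lt_trichotomy b 0 with hb | hb | hb
    · have hab0 : a + b < 0 := by
        rcases lt_trichotomy (a + b) 0 with h | h | h
        · exact h
        · exfalso; rw [h, abs_zero] at h2; linarith
        · exfalso; rw [abs_of_pos h] at h2; rw [abs_of_neg hb] at h1; linarith
      have hbtneg : b + t ≤ 0 := by linarith
      constructor
      · have hh : m ≤ -(a + b) := by rw [← abs_of_neg hab0]; exact min_le_right _ _
        rw [abs_of_nonpos hbtneg]; linarith
      · have hh : -b ≤ M := by rw [← abs_of_neg hb]; exact le_max_left _ _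
        rw [abs_of_nonpos hbtneg]; linarith
    · exfalso; rw [hb, abs_zero] at h1; linarith
    · have hbt0 : 0 < b + t := by linarith
      constructor
      · have hh : m ≤ b := by rw [← abs_of_pos hb]; exact min_le_left _ _
        rw [abs_of_pos hbt0]; linarith
      · have hh : a + b ≤ M := by rw [← abs_of_pos (by linarith : (0:ℝ) < a + b)]
                                  exact le_max_right _ _
        rw [abs_of_pos hbt0]; linarith
  -- integrand continuity
  have hcont : Continuous (fun t : ℝ => (1 + α) * |b + t| ^ α) := by
    apply Continuous.mul continuous_const
    apply Continuous.rpow_const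
    · exact (continuous_abs.comp (continuous_const.add continuous_id))
    · intro x; right; exact le_of_lt hα
  -- FTC
  have hftc : ∫ t in (0:ℝ)..a, (1 + α) * |b + t| ^ α
      = (a + b) * |a + b| ^ α - b * |b| ^ α := by
    have hin := intervalIntegral.integral_eq_sub_of_hasDerivAt
      (f := fun t : ℝ => (b + t) * |b + t| ^ α)
      (f' := fun t : ℝ => (1 + α) * |b + t| ^ α) (a := (0:ℝ)) (b := a)
      (fun t ht => by
        rw [Set.uIcc_of_le (le_of_lt ha)] at ht
        have hne : b + t ≠ 0 := by
          have hb1 := (hbt t ht).1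
          intro h; rw [h, abs_zero] at hb1; linarith
        have := (hasDerivAt_p hα hne).comp t ((hasDerivAt_id t).const_add b)
        simpa [Function.comp_def] using this)
      (hcont.intervalIntegrable 0 a)
    rw [hin]
    ring_nf
  -- bounds on the integral
  have hlow : (1 + α) * m ^ α * a ≤ ∫ t in (0:ℝ)..a, (1 + α) * |b + t| ^ α := by
    have hmono := intervalIntegral.integral_mono_on (μ := MeasureTheory.volume)
      (f := fun _ : ℝ => (1 + α) * m ^ α) (g := fun t : ℝ => (1 + α) * |b + t| ^ α)
      (le_of_lt ha) (intervalIntegrable_const) (hcont.intervalIntegrable 0 a)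
      (fun t ht => by
        have hb1 := (hbt t ht).1
        have hr : m ^ α ≤ |b + t| ^ α := Real.rpow_le_rpow (le_of_lt hmpos) hb1 (le_of_lt hα)
        nlinarith)
    rw [intervalIntegral.integral_const, smul_eq_mul] at hmono
    linarith
  have hup : (∫ t in (0:ℝ)..a, (1 + α) * |b + t| ^ α) ≤ (1 + α) * M ^ α * a := by
    have hmono := intervalIntegral.integral_mono_on (μ := MeasureTheory.volume)
      (g := fun _ : ℝ => (1 + α) * M ^ α) (f := fun t : ℝ => (1 + α) * |b + t| ^ α)
      (le_of_lt ha) (hcont.intervalIntegrable 0 a) (intervalIntegrable_const)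
      (fun t ht => by
        have hb2 := (hbt t ht).2
        have hr : |b + t| ^ α ≤ M ^ α := Real.rpow_le_rpow (abs_nonneg _) hb2 (le_of_lt hα)
        nlinarith)
    rw [intervalIntegral.integral_const, smul_eq_mul] at hmono
    linarith
  rw [hftc] at hlow hup
  have hpa : a * |a| ^ α ≤ m ^ α * a := by
    rw [abs_of_pos ha]
    have hr : a ^ α ≤ m ^ α := Real.rpow_le_rpow (le_of_lt ha) ham (le_of_lt hα)
    nlinarith
  have hpa0 : 0 ≤ a * |a| ^ α := by positivity
  have h2pos : (0:ℝ) < 2 ^ α := Real.rpow_pos_of_pos (by norm_num) α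
  have hMm : (M / 2) ^ α ≤ m ^ α :=
    Real.rpow_le_rpow (by positivity) (by linarith) (le_of_lt hα)
  have hdiv : (M / 2) ^ α = M ^ α / 2 ^ α :=
    Real.div_rpow (le_of_lt hMpos) (by norm_num : (0:ℝ) ≤ 2) α
  rw [hdiv] at hMm
  have hkey : M ^ α ≤ m ^ α * 2 ^ α := (div_le_iff₀ h2pos).mp hMm
  constructor
  · have step1 : α * m ^ α * a ≤ (a + b) * |a + b| ^ α - a * |a| ^ α - b * |b| ^ α := by
      linarith
    have step2 : α / 2 ^ α * a * M ^ α ≤ α * m ^ α * a := by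
      have hmul := mul_le_mul_of_nonneg_left hkey
        (show (0:ℝ) ≤ α / 2 ^ α * a by positivity)
      have heq : α / 2 ^ α * a * (m ^ α * 2 ^ α) = α * m ^ α * a := by
        field_simp
      linarith
    linarith
  · linarith

lemma aux1 {α : ℝ} (hα : 0 < α) (ξ₁ ξ₂ : ℝ) (h1 : |ξ₁| ≤ |ξ₂|) (h2 : |ξ₁| ≤ |ξ₁ + ξ₂|)
    (h3 : 0 ≤ ξ₁) :
    α / 2 ^ α * ximin ξ₁ ξ₂ * ximax ξ₁ ξ₂ ^ α
        ≤ |Omega (fun ξ : ℝ => ξ * |ξ| ^ α) ξ₁ ξ₂| ∧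
    |Omega (fun ξ : ℝ => ξ * |ξ| ^ α) ξ₁ ξ₂|
        ≤ (1 + α) * ximin ξ₁ ξ₂ * ximax ξ₁ ξ₂ ^ α := by
  have hximin : ximin ξ₁ ξ₂ = ξ₁ := by
    rw [ximin, min_eq_left h1, min_eq_left h2, abs_of_nonneg h3]
  have hximax : ximax ξ₁ ξ₂ = max |ξ₂| |ξ₁ + ξ₂| := by
    rw [ximax, max_eq_right h1]
  rcases eq_or_lt_of_le h3 with h0 | h0
  · have hom : Omega (fun ξ : ℝ => ξ * |ξ| ^ α) ξ₁ ξ₂ = 0 := by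
      simp [Omega, ← h0]
    rw [hom, hximin, ← h0]
    simp
  · have h1' : ξ₁ ≤ |ξ₂| := by rwa [abs_of_pos h0] at h1
    have h2' : ξ₁ ≤ |ξ₁ + ξ₂| := by rwa [abs_of_pos h0] at h2
    obtain ⟨hl, hu⟩ := core hα h0 h1' h2'
    have homega : Omega (fun ξ : ℝ => ξ * |ξ| ^ α) ξ₁ ξ₂
        = (ξ₁ + ξ₂) * |ξ₁ + ξ₂| ^ α - ξ₁ * |ξ₁| ^ α - ξ₂ * |ξ₂| ^ α := rfl
    have hpos : 0 ≤ Omega (fun ξ : ℝ => ξ * |ξ| ^ α) ξ₁ ξ₂ := by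
      rw [homega]
      have : 0 ≤ α / 2 ^ α * ξ₁ * (max |ξ₂| |ξ₁ + ξ₂|) ^ α := by positivity
      linarith
    rw [abs_of_nonneg hpos, homega, hximin, hximax]
    exact ⟨hl, hu⟩

lemma omega_neg (α ξ₁ ξ₂ : ℝ) :
    Omega (fun ξ : ℝ => ξ * |ξ| ^ α) (-ξ₁) (-ξ₂)
      = - Omega (fun ξ : ℝ => ξ * |ξ| ^ α) ξ₁ ξ₂ := by
  simp only [Omega, show -ξ₁ + -ξ₂ = -(ξ₁ + ξ₂) by ring, abs_neg]
  ring

lemma ximin_neg (ξ₁ ξ₂ : ℝ) : ximin (-ξ₁) (-ξ₂) = ximin ξ₁ ξ₂ := by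
  rw [ximin, ximin, show -ξ₁ + -ξ₂ = -(ξ₁ + ξ₂) by ring, abs_neg, abs_neg, abs_neg]

lemma ximax_neg (ξ₁ ξ₂ : ℝ) : ximax (-ξ₁) (-ξ₂) = ximax ξ₁ ξ₂ := by
  rw [ximax, ximax, show -ξ₁ + -ξ₂ = -(ξ₁ + ξ₂) by ring, abs_neg, abs_neg, abs_neg]

lemma aux2 {α : ℝ} (hα : 0 < α) (ξ₁ ξ₂ : ℝ) (h1 : |ξ₁| ≤ |ξ₂|) (h2 : |ξ₁| ≤ |ξ₁ + ξ₂|) :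
    α / 2 ^ α * ximin ξ₁ ξ₂ * ximax ξ₁ ξ₂ ^ α
        ≤ |Omega (fun ξ : ℝ => ξ * |ξ| ^ α) ξ₁ ξ₂| ∧
    |Omega (fun ξ : ℝ => ξ * |ξ| ^ α) ξ₁ ξ₂|
        ≤ (1 + α) * ximin ξ₁ ξ₂ * ximax ξ₁ ξ₂ ^ α := by
  rcases le_total 0 ξ₁ with h3 | h3
  · exact aux1 hα ξ₁ ξ₂ h1 h2 h3
  · have := aux1 hα (-ξ₁) (-ξ₂) (by simpa using h1)
      (by rw [abs_neg, show -ξ₁ + -ξ₂ = -(ξ₁ + ξ₂) by ring, abs_neg]; exact h2)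
      (by linarith)
    rwa [omega_neg, abs_neg, ximin_neg, ximax_neg] at this

lemma omega_flip (α ξ₁ ξ₂ : ℝ) :
    Omega (fun ξ : ℝ => ξ * |ξ| ^ α) (-(ξ₁ + ξ₂)) ξ₂
      = Omega (fun ξ : ℝ => ξ * |ξ| ^ α) ξ₁ ξ₂ := by
  simp only [Omega, show -(ξ₁ + ξ₂) + ξ₂ = -ξ₁ by ring, abs_neg]
  ring

lemma ximin_flip (ξ₁ ξ₂ : ℝ) : ximin (-(ξ₁ + ξ₂)) ξ₂ = ximin ξ₁ ξ₂ := by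
  simp only [ximin, show -(ξ₁ + ξ₂) + ξ₂ = -ξ₁ by ring, abs_neg]
  ac_rfl

lemma ximax_flip (ξ₁ ξ₂ : ℝ) : ximax (-(ξ₁ + ξ₂)) ξ₂ = ximax ξ₁ ξ₂ := by
  simp only [ximax, show -(ξ₁ + ξ₂) + ξ₂ = -ξ₁ by ring, abs_neg]
  ac_rfl

lemma aux3 {α : ℝ} (hα : 0 < α) (ξ₁ ξ₂ : ℝ) (h1 : |ξ₁| ≤ |ξ₂|) :
    α / 2 ^ α * ximin ξ₁ ξ₂ * ximax ξ₁ ξ₂ ^ α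
        ≤ |Omega (fun ξ : ℝ => ξ * |ξ| ^ α) ξ₁ ξ₂| ∧
    |Omega (fun ξ : ℝ => ξ * |ξ| ^ α) ξ₁ ξ₂|
        ≤ (1 + α) * ximin ξ₁ ξ₂ * ximax ξ₁ ξ₂ ^ α := by
  rcases le_total |ξ₁| |ξ₁ + ξ₂| with h2 | h2
  · exact aux2 hα ξ₁ ξ₂ h1 h2
  · have := aux2 hα (-(ξ₁ + ξ₂)) ξ₂
      (by rw [abs_neg]; exact le_trans h2 h1)
      (by rw [abs_neg, show -(ξ₁ + ξ₂) + ξ₂ = -ξ₁ by ring, abs_neg]; exact h2)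
    rwa [omega_flip, ximin_flip, ximax_flip] at this

lemma omega_swap (α ξ₁ ξ₂ : ℝ) :
    Omega (fun ξ : ℝ => ξ * |ξ| ^ α) ξ₂ ξ₁ = Omega (fun ξ : ℝ => ξ * |ξ| ^ α) ξ₁ ξ₂ := by
  simp only [Omega, add_comm ξ₂ ξ₁]
  ring

lemma ximin_swap (ξ₁ ξ₂ : ℝ) : ximin ξ₂ ξ₁ = ximin ξ₁ ξ₂ := by
  simp only [ximin, add_comm ξ₂ ξ₁]
  ac_rfl

lemma ximax_swap (ξ₁ ξ₂ : ℝ) : ximax ξ₂ ξ₁ = ximax ξ₁ ξ₂ := by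
  simp only [ximax, add_comm ξ₂ ξ₁]
  ac_rfl

end Stmt1Aux

theorem stmt1 (α : ℝ) (hα : 0 < α) :
    ∃ c C : ℝ, 0 < c ∧ c ≤ C ∧
      ∀ ξ₁ ξ₂ : ℝ,
        c * ximin ξ₁ ξ₂ * ximax ξ₁ ξ₂ ^ α
            ≤ |Omega (fun ξ : ℝ => ξ * |ξ| ^ α) ξ₁ ξ₂| ∧
        |Omega (fun ξ : ℝ => ξ * |ξ| ^ α) ξ₁ ξ₂|
            ≤ C * ximin ξ₁ ξ₂ * ximax ξ₁ ξ₂ ^ α := by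
  refine ⟨α / 2 ^ α, 1 + α, by positivity, ?_, ?_⟩
  · have h2 : (1:ℝ) ≤ 2 ^ α := by
      rw [show (1:ℝ) = (2:ℝ) ^ (0:ℝ) by simp]
      exact Real.rpow_le_rpow_of_exponent_le (by norm_num) (le_of_lt hα)
    have := div_le_self (le_of_lt hα) h2
    linarith
  · intro ξ₁ ξ₂
    rcases le_total |ξ₁| |ξ₂| with h1 | h1
    · exact Stmt1Aux.aux3 hα ξ₁ ξ₂ h1
    · have := Stmt1Aux.aux3 hα ξ₂ ξ₁ h1
      rwa [Stmt1Aux.omega_swap, Stmt1Aux.ximin_swap, Stmt1Aux.ximax_swap] at this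
end
end

section
/- Let p : ℝ → ℝ be defined by p(ξ) = ξ² coth(ξ) for ξ ≠ 0 and p(0) = 0 (the symbol of the linear Intermediate Long Wave operator ∂_x D_x coth(D_x)). Then p is odd, is C¹ on ℝ and C² on ℝ \ {0}, and there exist A ≥ 1 and constants 0 < c ≤ C such that for all ξ with |ξ| ≥ A one has c|ξ| ≤ |p′(ξ)| ≤ C|ξ| and c ≤ |p″(ξ)| ≤ C; that is, p satisfies the criterion of Lemma 2.1 with α = 1. -/
noncomputable section
open Real Filter Topology

/-- The symbol of the linear Intermediate Long Wave operator `∂ₓ Dₓ coth(Dₓ)`: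
`p(ξ) = ξ² coth ξ` for `ξ ≠ 0`, `p(0) = 0`. -/
def pILW (ξ : ℝ) : ℝ := if ξ = 0 then 0 else ξ ^ 2 * Real.cosh ξ / Real.sinh ξ

/-- first derivative formula away from 0 -/
def D1 (ξ : ℝ) : ℝ := 2*ξ*Real.cosh ξ/Real.sinh ξ - ξ^2/(Real.sinh ξ)^2

/-- second derivative formula away from 0 -/
def D2 (ξ : ℝ) : ℝ :=
  2*Real.cosh ξ/Real.sinh ξ - 4*ξ/(Real.sinh ξ)^2 + 2*ξ^2*Real.cosh ξ/(Real.sinh ξ)^3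

lemma pILW_neg (ξ : ℝ) : pILW (-ξ) = -pILW ξ := by
  rcases eq_or_ne ξ 0 with h | h
  · simp [pILW, h]
  · have hs : Real.sinh ξ ≠ 0 := Real.sinh_ne_zero.mpr h
    simp only [pILW, if_neg h, if_neg (neg_ne_zero.mpr h), Real.cosh_neg, Real.sinh_neg]
    rw [neg_sq, mul_div_assoc, div_neg]
    ring

lemma pILW_eventually (ξ : ℝ) (hξ : ξ ≠ 0) :
    pILW =ᶠ[𝓝 ξ] fun x => x ^ 2 * Real.cosh x / Real.sinh x := by
  filter_upwards [isOpen_compl_singleton.mem_nhds (by simpa using hξ : ξ ∈ ({(0:ℝ)}ᶜ))]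
    with x hx
  simp [pILW, (by simpa using hx : x ≠ 0)]

lemma hasDerivAt_pILW {ξ : ℝ} (hξ : ξ ≠ 0) : HasDerivAt pILW (D1 ξ) ξ := by
  have hs : Real.sinh ξ ≠ 0 := Real.sinh_ne_zero.mpr hξ
  have h : HasDerivAt (fun x => x ^ 2 * Real.cosh x / Real.sinh x)
      (((2*ξ^1 * Real.cosh ξ + ξ^2 * Real.sinh ξ) * Real.sinh ξ
          - ξ^2 * Real.cosh ξ * Real.cosh ξ) / (Real.sinh ξ)^2) ξ := by
    exact (((hasDerivAt_pow 2 ξ).mul (Real.hasDerivAt_cosh ξ)).div (Real.hasDerivAt_sinh ξ) hs)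
  have heq : ((2*ξ^1 * Real.cosh ξ + ξ^2 * Real.sinh ξ) * Real.sinh ξ
      - ξ^2 * Real.cosh ξ * Real.cosh ξ) / (Real.sinh ξ)^2 = D1 ξ := by
    have h1 := Real.cosh_sq_sub_sinh_sq ξ
    unfold D1
    field_simp
    linear_combination (-ξ) * h1
  rw [heq] at h
  exact h.congr_of_eventuallyEq (pILW_eventually ξ hξ)

lemma tendsto_x_div_sinh : Tendsto (fun x : ℝ => x / Real.sinh x) (𝓝[≠] (0:ℝ)) (𝓝 1) := by
  have h : Tendsto (fun x : ℝ => Real.sinh x / x) (𝓝[≠] (0:ℝ)) (𝓝 1) := by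
    have := (Real.hasDerivAt_sinh 0)
    rw [hasDerivAt_iff_tendsto_slope] at this
    simp only [Real.cosh_zero] at this
    refine this.congr' ?_
    filter_upwards [self_mem_nhdsWithin] with x hx
    simp [slope_def_field, Real.sinh_zero]
  have h2 := h.inv₀ (by norm_num)
  simpa using h2.congr' (by
    filter_upwards [self_mem_nhdsWithin] with x (hx : x ≠ 0)
    simp [inv_div])

lemma hasDerivAt_pILW_zero : HasDerivAt pILW 1 0 := by
  rw [hasDerivAt_iff_tendsto_slope]
  have hc : Tendsto (fun x : ℝ => Real.cosh x) (𝓝[≠] (0:ℝ)) (𝓝 1) := by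
    simpa using (Real.continuous_cosh.continuousAt (x := 0)).continuousWithinAt.tendsto
  have h := hc.mul tendsto_x_div_sinh
  rw [(by norm_num : (1:ℝ) = 1 * 1)]
  refine h.congr' ?_
  filter_upwards [self_mem_nhdsWithin] with x (hx : x ≠ 0)
  have hs : Real.sinh x ≠ 0 := Real.sinh_ne_zero.mpr hx
  simp only [slope_def_field, pILW, if_neg hx, if_pos rfl]
  field_simp
  simp
  ring

lemma deriv_pILW_zero : deriv pILW 0 = 1 := hasDerivAt_pILW_zero.deriv

lemma deriv_pILW_ne {ξ : ℝ} (hξ : ξ ≠ 0) : deriv pILW ξ = D1 ξ := (hasDerivAt_pILW hξ).deriv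

lemma tendsto_D1_zero : Tendsto D1 (𝓝[≠] (0:ℝ)) (𝓝 1) := by
  have hc : Tendsto (fun x : ℝ => Real.cosh x) (𝓝[≠] (0:ℝ)) (𝓝 1) := by
    simpa using (Real.continuous_cosh.continuousAt (x := 0)).continuousWithinAt.tendsto
  have h1 : Tendsto (fun x : ℝ => 2 * Real.cosh x * (x / Real.sinh x)
      - (x / Real.sinh x)^2) (𝓝[≠] (0:ℝ)) (𝓝 1) := by
    have := (((hc.const_mul 2).mul tendsto_x_div_sinh).sub (tendsto_x_div_sinh.pow 2))
    norm_num at this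
    exact this
  refine h1.congr' ?_
  filter_upwards [self_mem_nhdsWithin] with x (hx : x ≠ 0)
  have hs : Real.sinh x ≠ 0 := Real.sinh_ne_zero.mpr hx
  simp only [D1]
  field_simp

lemma differentiable_pILW : Differentiable ℝ pILW := by
  intro x
  rcases eq_or_ne x 0 with h | h
  · exact h ▸ hasDerivAt_pILW_zero.differentiableAt
  · exact (hasDerivAt_pILW h).differentiableAt

lemma continuous_deriv_pILW : Continuous (deriv pILW) := by
  rw [continuous_iff_continuousAt]
  intro x
  rcases eq_or_ne x 0 with h | h
  · subst h
    unfold ContinuousAt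
    rw [deriv_pILW_zero, ← nhdsNE_sup_pure, tendsto_sup]
    constructor
    · refine tendsto_D1_zero.congr' ?_
      filter_upwards [self_mem_nhdsWithin] with y (hy : y ≠ 0)
      exact (deriv_pILW_ne hy).symm
    · rw [tendsto_pure_left]
      intro s hs
      exact mem_of_mem_nhds (by rwa [deriv_pILW_zero])
  · have hD1 : ContinuousAt D1 x := by
      have hs : Real.sinh x ≠ 0 := Real.sinh_ne_zero.mpr h
      unfold D1
      have hs2 : (Real.sinh x)^2 ≠ 0 := pow_ne_zero 2 hs
      have hcont : Continuous fun y : ℝ => 2*y*Real.cosh y :=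
        (continuous_const.mul continuous_id).mul Real.continuous_cosh
      have hcont2 : Continuous fun y : ℝ => y^2 := continuous_pow 2
      exact (hcont.continuousAt.div Real.continuous_sinh.continuousAt hs).sub
        (hcont2.continuousAt.div (Real.continuous_sinh.continuousAt.pow 2) hs2)
    refine hD1.congr ?_
    filter_upwards [isOpen_compl_singleton.mem_nhds (by simpa using h : x ∈ ({(0:ℝ)}ᶜ))]
      with y hy
    exact (deriv_pILW_ne (by simpa using hy)).symm

lemma contDiff_one_pILW : ContDiff ℝ 1 pILW :=
  contDiff_one_iff_deriv.mpr ⟨differentiable_pILW, continuous_deriv_pILW⟩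

lemma contDiffOn_pILW : ContDiffOn ℝ 2 pILW {(0:ℝ)}ᶜ := by
  have h : ContDiffOn ℝ 2 (fun x : ℝ => x ^ 2 * Real.cosh x / Real.sinh x) {(0:ℝ)}ᶜ := by
    refine ContDiffOn.div ?_ ?_ ?_
    · exact ((contDiff_id.pow 2).mul Real.contDiff_cosh).contDiffOn
    · exact Real.contDiff_sinh.contDiffOn
    · intro x hx
      exact Real.sinh_ne_zero.mpr (by simpa using hx)
  exact h.congr (fun x hx => by simp [pILW, (by simpa using hx : x ≠ 0)])

lemma hasDerivAt_D1 {ξ : ℝ} (hξ : ξ ≠ 0) : HasDerivAt D1 (D2 ξ) ξ := by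
  have hs : Real.sinh ξ ≠ 0 := Real.sinh_ne_zero.mpr hξ
  have hs2 : (Real.sinh ξ)^2 ≠ 0 := pow_ne_zero 2 hs
  have ha : HasDerivAt (fun x : ℝ => 2*x*Real.cosh x)
      (2*Real.cosh ξ + 2*ξ*Real.sinh ξ) ξ := by
    have := ((hasDerivAt_id ξ).const_mul (2:ℝ)).mul (Real.hasDerivAt_cosh ξ)
    refine this.congr_deriv ?_
    simp only [id_eq]
    ring
  have hb : HasDerivAt (fun x : ℝ => (Real.sinh x)^2)
      (2*Real.cosh ξ*Real.sinh ξ) ξ := by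
    have := (Real.hasDerivAt_sinh ξ).pow 2
    refine this.congr_deriv ?_
    ring
  have h := (ha.div (Real.hasDerivAt_sinh ξ) hs).sub
    ((hasDerivAt_pow 2 ξ).div hb hs2)
  refine h.congr_deriv ?_
  have h1 := Real.cosh_sq_sub_sinh_sq ξ
  unfold D2
  field_simp
  linear_combination (-2*ξ*Real.sinh ξ) * h1

lemma deriv2_pILW_ne {ξ : ℝ} (hξ : ξ ≠ 0) : deriv (deriv pILW) ξ = D2 ξ := by
  have hev : deriv pILW =ᶠ[𝓝 ξ] D1 := by
    filter_upwards [isOpen_compl_singleton.mem_nhds (by simpa using hξ : ξ ∈ ({(0:ℝ)}ᶜ))]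
      with y hy
    exact deriv_pILW_ne (by simpa using hy)
  rw [hev.deriv_eq]
  exact (hasDerivAt_D1 hξ).deriv

lemma deriv_pILW_even (ξ : ℝ) : deriv pILW (-ξ) = deriv pILW ξ := by
  have h : pILW = fun x => -pILW (-x) := by
    funext x
    rw [pILW_neg, neg_neg]
  conv_rhs => rw [h]
  rw [deriv.fun_neg, deriv_comp_neg, neg_neg]

lemma deriv2_pILW_odd (ξ : ℝ) : deriv (deriv pILW) (-ξ) = -deriv (deriv pILW) ξ := by
  have h : deriv pILW = fun x => deriv pILW (-x) := by
    funext x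
    rw [deriv_pILW_even]
  conv_rhs => rw [h]
  rw [deriv_comp_neg, neg_neg]

lemma bounds_pos {ξ : ℝ} (hξ : 4 ≤ ξ) :
    (ξ ≤ D1 ξ ∧ D1 ξ ≤ 9*ξ) ∧ (1 ≤ D2 ξ ∧ D2 ξ ≤ 9) := by
  have hξ0 : (0:ℝ) < ξ := by linarith
  have hs0 : 0 < Real.sinh ξ := Real.sinh_pos_iff.mpr hξ0
  have hs : Real.sinh ξ ≠ 0 := ne_of_gt hs0
  have hξs : ξ ≤ Real.sinh ξ := le_of_lt (Real.self_lt_sinh_iff.mpr hξ0)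
  have hsc : Real.sinh ξ ≤ Real.cosh ξ := by
    have := Real.cosh_sub_sinh ξ
    have := Real.exp_pos (-ξ)
    linarith
  have hc2s : Real.cosh ξ ≤ 2 * Real.sinh ξ := by
    have h1 := Real.cosh_sub_sinh ξ
    have h2 : Real.exp (-ξ) ≤ 1 := Real.exp_le_one_iff.mpr (by linarith)
    linarith
  have hD1 : D1 ξ = (2*ξ*Real.cosh ξ*Real.sinh ξ - ξ^2) / (Real.sinh ξ)^2 := by
    unfold D1
    field_simp
  have hD2 : D2 ξ = (2*Real.cosh ξ*(Real.sinh ξ)^2 - 4*ξ*Real.sinh ξ + 2*ξ^2*Real.cosh ξ)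
      / (Real.sinh ξ)^3 := by
    unfold D2
    field_simp
  have hs2 : (0:ℝ) < (Real.sinh ξ)^2 := by positivity
  have hs3 : (0:ℝ) < (Real.sinh ξ)^3 := by positivity
  refine ⟨⟨?_, ?_⟩, ?_, ?_⟩
  · rw [hD1, le_div_iff₀ hs2]
    nlinarith [mul_le_mul_of_nonneg_left hξs (le_of_lt hξ0),
      mul_le_mul_of_nonneg_left hsc (by positivity : (0:ℝ) ≤ ξ * Real.sinh ξ)]
  · rw [hD1, div_le_iff₀ hs2]
    nlinarith [mul_le_mul_of_nonneg_left hc2s (by positivity : (0:ℝ) ≤ ξ * Real.sinh ξ),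
      sq_nonneg ξ]
  · rw [hD2, le_div_iff₀ hs3]
    nlinarith [mul_le_mul_of_nonneg_left hξs (le_of_lt hξ0),
      mul_le_mul_of_nonneg_left hsc (le_of_lt hs2),
      mul_le_mul_of_nonneg_left hξs (by positivity : (0:ℝ) ≤ ξ * Real.sinh ξ),
      Real.cosh_pos (x := ξ)]
  · rw [hD2, div_le_iff₀ hs3]
    nlinarith [mul_le_mul_of_nonneg_left hc2s (le_of_lt hs2),
      mul_le_mul_of_nonneg_left hc2s (by positivity : (0:ℝ) ≤ ξ^2),
      mul_le_mul_of_nonneg_left (mul_le_mul_of_nonneg_left hξs (le_of_lt hξ0)) (le_of_lt hs0),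
      mul_pos hξ0 hs0]

theorem stmt2 :
    (∀ ξ : ℝ, pILW (-ξ) = -pILW ξ) ∧
    ContDiff ℝ 1 pILW ∧
    ContDiffOn ℝ 2 pILW {(0:ℝ)}ᶜ ∧
    ∃ A : ℝ, 1 ≤ A ∧ ∃ c C : ℝ, 0 < c ∧ c ≤ C ∧
      ∀ ξ : ℝ, A ≤ |ξ| →
        (c * |ξ| ≤ |deriv pILW ξ| ∧ |deriv pILW ξ| ≤ C * |ξ|) ∧
        (c ≤ |deriv (deriv pILW) ξ| ∧ |deriv (deriv pILW) ξ| ≤ C) := by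
  refine ⟨pILW_neg, contDiff_one_pILW, contDiffOn_pILW, 4, by norm_num, 1, 9,
    by norm_num, by norm_num, ?_⟩
  have key : ∀ η : ℝ, 4 ≤ η →
      (1 * η ≤ |deriv pILW η| ∧ |deriv pILW η| ≤ 9 * η) ∧
      (1 ≤ |deriv (deriv pILW) η| ∧ |deriv (deriv pILW) η| ≤ 9) := by
    intro η hη
    have hη0 : η ≠ 0 := by positivity
    obtain ⟨⟨h1, h2⟩, h3, h4⟩ := bounds_pos hη
    rw [deriv_pILW_ne hη0, deriv2_pILW_ne hη0]
    have hD1pos : (0:ℝ) ≤ D1 η := by linarith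
    have hD2pos : (0:ℝ) ≤ D2 η := by linarith
    rw [abs_of_nonneg hD1pos, abs_of_nonneg hD2pos]
    exact ⟨⟨by linarith, h2⟩, h3, h4⟩
  intro ξ hξ
  rcases le_or_gt 0 ξ with hpos | hneg
  · rw [abs_of_nonneg hpos] at hξ ⊢
    exact key ξ hξ
  · rw [abs_of_neg hneg] at hξ ⊢
    have h := key (-ξ) hξ
    rwa [deriv_pILW_even, deriv2_pILW_odd, abs_neg] at h
end
end
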